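/- Let (E, τ) be a barrelled locally convex-solid Riesz space. Then the topological dual E' is a band in the order dual E~: if 0 ≤ f_α ↑ f in E~ with each f_α continuous, then f is continuous; the key step is that the set V = {x ∈ E : |f_α(x)| ≤ 1 for all α} is an absorbing, balanced, convex, closed set (a barrel), hence a neighborhood of zero. -/

import Mathlib

open Filter Topology Set
open Pointwise

/-- A subset of a Riesz space is solid if `|x| ≤ |y|` and `y ∈ S` imply `x ∈ S`. -/
def SolidSet {E : Type*} [Lattice E] [AddCommGroup E] (S : Set E) : Prop :=
  ∀ ⦃x y : E⦄, |x| ≤ |y| → y ∈ S → x ∈ S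

/-- A linear topology on a Riesz space is locally solid if the neighborhood filter at zero
has a basis of solid sets. -/
def LocallySolid (E : Type*) [Lattice E] [AddCommGroup E] [TopologicalSpace E] : Prop :=
  (𝓝 (0 : E)).HasBasis (fun S : Set E => S ∈ 𝓝 (0 : E) ∧ SolidSet S) id

/-- In a barrelled locally convex-solid Riesz space, the topological dual is a band in
the order dual: if `0 ≤ f_α ↑ f` in the order dual with each `f_α` continuous, then `f`
is continuous.  Barrelledness is expressed by: every barrel (closed, convex, balanced,
absorbing set) is a neighborhood of zero. -/
theorem stmt19 {E : Type*}
    [AddCommGroup E] [Lattice E] [Module ℝ E]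
    [CovariantClass E E (· + ·) (· ≤ ·)] [PosSMulMono ℝ E]
    [TopologicalSpace E] [IsTopologicalAddGroup E] [ContinuousSMul ℝ E]
    [LocallyConvexSpace ℝ E]
    (hls : LocallySolid E)
    (hbarrel : ∀ S : Set E, IsClosed S → Convex ℝ S → Balanced ℝ S → Absorbent ℝ S →
      S ∈ 𝓝 (0 : E)) :
    ∀ (ι : Type*) [Nonempty ι] [SemilatticeSup ι] (f : ι → E →ₗ[ℝ] ℝ) (F : E →ₗ[ℝ] ℝ),
      (∀ α, ∀ x : E, 0 ≤ x → 0 ≤ f α x) →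
      (∀ α β, α ≤ β → ∀ x : E, 0 ≤ x → f α x ≤ f β x) →
      (∀ α, Continuous (f α)) →
      (∀ x : E, 0 ≤ x → IsLUB (Set.range fun α => f α x) (F x)) →
      Continuous F := by
  intro ι _ _ f F hpos hmono hcont hF
  -- |f α x| ≤ f α |x|
  have habs : ∀ α (x : E), |f α x| ≤ f α |x| := by
    intro α x
    rw [abs_le]
    constructor
    · have h1 : (0 : E) ≤ |x| + x := by
        have h := sub_nonneg.mpr (neg_le_abs x)
        rwa [sub_neg_eq_add] at h
      have := hpos α _ h1
      rw [map_add] at this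
      linarith
    · have h1 : (0 : E) ≤ |x| - x := sub_nonneg.mpr (le_abs_self x)
      have := hpos α _ h1
      rw [map_sub] at this
      linarith
  have hFub : ∀ α (x : E), 0 ≤ x → f α x ≤ F x := fun α x hx => (hF x hx).1 ⟨α, rfl⟩
  have hbound : ∀ α (x : E), |f α x| ≤ F |x| := fun α x =>
    (habs α x).trans (hFub α |x| (abs_nonneg x))
  have hFpos : ∀ x : E, 0 ≤ x → 0 ≤ F x := fun x hx =>
    le_trans (hpos (Classical.arbitrary ι) x hx) (hFub _ x hx)
  -- the barrel
  set V : Set E := {x : E | ∀ α, |f α x| ≤ 1} with hVdef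
  have hVclosed : IsClosed V := by
    have : V = ⋂ α, {x : E | |f α x| ≤ 1} := by
      ext x; simp [hVdef, Set.mem_iInter]
    rw [this]
    exact isClosed_iInter fun α => isClosed_le ((hcont α).abs) continuous_const
  have hVconvex : Convex ℝ V := by
    intro x hx y hy a b ha hb hab
    intro α
    have h1 := hx α
    have h2 := hy α
    have hcalc : |f α (a • x + b • y)| = |a * f α x + b * f α y| := by
      rw [map_add, map_smul, map_smul, smul_eq_mul, smul_eq_mul]
    rw [hcalc]
    calc |a * f α x + b * f α y| ≤ |a * f α x| + |b * f α y| := abs_add_le _ _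
      _ = a * |f α x| + b * |f α y| := by
          rw [abs_mul, abs_mul, abs_of_nonneg ha, abs_of_nonneg hb]
      _ ≤ a * 1 + b * 1 := by
          gcongr
      _ = 1 := by linarith
  have hVbalanced : Balanced ℝ V := by
    intro a ha x hx
    obtain ⟨y, hy, rfl⟩ := hx
    intro α
    rw [map_smul, smul_eq_mul, abs_mul]
    have ha' : |a| ≤ 1 := by rwa [Real.norm_eq_abs] at ha
    exact mul_le_one₀ ha' (abs_nonneg _) (hy α)
  have hVabsorbent : Absorbent ℝ V := by
    rw [absorbent_iff_eventually_nhdsNE_zero]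
    intro x
    have hδ : (0 : ℝ) < 1 / (F |x| + 1) := by
      have := hFpos |x| (abs_nonneg x)
      positivity
    have hball : {c : ℝ | |c| < 1 / (F |x| + 1)} ∈ 𝓝 (0 : ℝ) := by
      have := Metric.ball_mem_nhds (0 : ℝ) hδ
      simpa [Metric.ball, Real.dist_eq] using this
    apply eventually_nhdsWithin_of_eventually_nhds
    rw [eventually_iff]
    apply mem_of_superset hball
    intro c hc α
    rw [map_smul, smul_eq_mul, abs_mul]
    have h1 : |f α x| ≤ F |x| := hbound α x
    have h2 := hFpos |x| (abs_nonneg x)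
    have h3 : |c| * |f α x| ≤ (1 / (F |x| + 1)) * (F |x| + 1) := by
      apply mul_le_mul (le_of_lt hc) (by linarith) (abs_nonneg _) (le_of_lt hδ)
    rw [one_div_mul_cancel (by linarith)] at h3
    exact h3
  have hVmem : V ∈ 𝓝 (0 : E) := hbarrel V hVclosed hVconvex hVbalanced hVabsorbent
  -- find a solid neighborhood inside V
  obtain ⟨S, ⟨hS0, hSsolid⟩, hSV⟩ := hls.mem_iff.mp hVmem
  -- F is bounded by 1 on S
  have hFmono : ∀ x y : E, x ≤ y → F x ≤ F y := by
    intro x y hxy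
    have := hFpos (y - x) (sub_nonneg.mpr hxy)
    rw [map_sub] at this
    linarith
  have hFabs : ∀ x : E, |F x| ≤ F |x| := by
    intro x
    rw [abs_le]
    constructor
    · have := hFmono (-x) |x| (neg_le_abs x)
      rw [map_neg] at this
      linarith
    · exact hFmono x |x| (le_abs_self x)
  have hSbound : ∀ x ∈ S, |F x| ≤ 1 := by
    intro x hx
    have habs_mem : |x| ∈ S := hSsolid (le_of_eq (abs_abs x)) hx
    have hxV : |x| ∈ V := hSV habs_mem
    have : F |x| ≤ 1 := by
      apply (hF |x| (abs_nonneg x)).2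
      rintro r ⟨α, rfl⟩
      exact (le_abs_self _).trans (hxV α)
    exact (hFabs x).trans this
  -- conclude continuity
  have hcont0 : ContinuousAt F 0 := by
    rw [ContinuousAt, map_zero, NormedAddCommGroup.tendsto_nhds_zero]
    intro ε hε
    have hεS : (ε / 2) • S ∈ 𝓝 (0 : E) :=
      (set_smul_mem_nhds_zero_iff (by positivity : (ε / 2 : ℝ) ≠ 0)).mpr hS0
    filter_upwards [hεS] with x hx
    obtain ⟨y, hy, rfl⟩ := hx
    rw [map_smul, smul_eq_mul, Real.norm_eq_abs, abs_mul, abs_of_pos (by positivity : (0:ℝ) < ε/2)]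
    calc ε / 2 * |F y| ≤ ε / 2 * 1 := by
          have := hSbound y hy
          nlinarith
      _ < ε := by linarith
  have : Continuous F.toAddMonoidHom := continuous_of_continuousAt_zero F.toAddMonoidHom hcont0
  exact this
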